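/- Under the hypotheses of the cosine-iterate bounds (T, B, C₀ strongly continuous, ‖T(t)‖ ≤ M e^(ωt) t^(α−1)/Γ(α), ‖C₀(t)‖ ≤ M e^(ωt), C_{n+1}(t)x = ∫₀ᵗ T(t−s)B(s)C_n(s)x ds, 1 < α ≤ 2, M ≥ 1, ω ≥ 0), for every t ≥ 0 and x ∈ X the series Σ_{n=0}^∞ C_n(t)x converges absolutely in X, and its sum C(t)x satisfies ‖C(t)x‖ ≤ M · e^(ωt) · E_α(M·K_t·t^α) · ‖x‖, where K_t = sup_{0≤s≤t} ‖B(s)‖. -/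

import Mathlib

open MeasureTheory intervalIntegral

lemma real_beta_eval {a b s : ℝ} (ha : 0 < a) (hb : 0 < b) (hs : 0 < s) :
    ∫ u in (0:ℝ)..s, u ^ (a - 1) * (s - u) ^ (b - 1) =
      Real.Gamma a * Real.Gamma b / Real.Gamma (a + b) * s ^ (a + b - 1) := by
  have h1 : ∫ u in (0:ℝ)..s, ((u:ℂ)) ^ ((a:ℂ) - 1) * ((s:ℂ) - u) ^ ((b:ℂ) - 1)
      = (s:ℂ) ^ ((a:ℂ) + b - 1) * Complex.betaIntegral a b :=
    Complex.betaIntegral_scaled a b hs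
  have h2 : Complex.betaIntegral a b
      = Complex.Gamma a * Complex.Gamma b / Complex.Gamma (a + b) := by
    have := Complex.Gamma_mul_Gamma_eq_betaIntegral (s := (a:ℂ)) (t := (b:ℂ))
      (by simpa using ha) (by simpa using hb)
    have hne : Complex.Gamma ((a:ℂ) + b) ≠ 0 :=
      Complex.Gamma_ne_zero_of_re_pos (by simpa using add_pos ha hb)
    field_simp [this]
    rw [this]; ring
  have h3 : ∫ u in (0:ℝ)..s, ((u:ℂ)) ^ ((a:ℂ) - 1) * ((s:ℂ) - u) ^ ((b:ℂ) - 1)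
      = ((∫ u in (0:ℝ)..s, u ^ (a - 1) * (s - u) ^ (b - 1) : ℝ) : ℂ) := by
    rw [← intervalIntegral.integral_ofReal]
    refine intervalIntegral.integral_congr fun u hu => ?_
    rw [Set.uIcc_of_le hs.le] at hu
    push_cast
    rw [Complex.ofReal_cpow hu.1, Complex.ofReal_cpow (by linarith [hu.2])]
    push_cast
    ring
  have h4 : ((s:ℂ)) ^ ((a:ℂ) + b - 1) = ((s ^ (a + b - 1) : ℝ) : ℂ) := by
    rw [Complex.ofReal_cpow hs.le]; push_cast; ring_nf
  rw [h3, h4, h2] at h1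
  have := congrArg Complex.re h1
  simpa [← Complex.ofReal_mul, ← Complex.ofReal_div, Complex.Gamma_ofReal,
    ← Complex.ofReal_add, mul_comm] using this

lemma real_beta_eval' {c α s : ℝ} (hc : 0 ≤ c) (hα : 0 < α) (hs : 0 < s) :
    ∫ u in (0:ℝ)..s, u ^ c * (s - u) ^ (α - 1) =
      Real.Gamma (c + 1) * Real.Gamma α / Real.Gamma (c + 1 + α) * s ^ (c + α) := by
  have := real_beta_eval (a := c + 1) (b := α) (by linarith) hα hs
  rw [show c + 1 - 1 = c from by ring, show c + 1 + α - 1 = c + α from by ring] at this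
  exact this

lemma fact_le_Gamma_aux {α : ℝ} (hα : 1 < α) (k : ℕ) :
    (k.factorial : ℝ) ≤ Real.Gamma ((k : ℝ) * α + 1) := by
  rcases Nat.eq_zero_or_pos k with hk | hk
  · simp [hk, Real.Gamma_one]
  · have hk1 : (1:ℝ) ≤ (k:ℝ) := by exact_mod_cast hk
    have h1 : ((k : ℝ) + 1) ≤ (k : ℝ) * α + 1 := by nlinarith
    have h2 : (2 : ℝ) ≤ (k : ℝ) + 1 := by linarith
    have := Real.Gamma_strictMonoOn_Ici.monotoneOn (a := ((k:ℝ)+1)) (b := ((k:ℝ)*α+1))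
      (by simpa using h2) (by simp; linarith) h1
    rwa [Real.Gamma_nat_eq_factorial] at this

lemma ML_summable {α : ℝ} (hα : 1 < α) {z : ℝ} (hz : 0 ≤ z) :
    Summable (fun k : ℕ => z ^ k / Real.Gamma ((k : ℝ) * α + 1)) := by
  refine Summable.of_nonneg_of_le (fun k => ?_) (fun k => ?_)
    (Real.summable_pow_div_factorial z)
  · have hG : (0 : ℝ) < Real.Gamma ((k : ℝ) * α + 1) :=
      Real.Gamma_pos_of_pos (by positivity)
    positivity
  · have hf : (0:ℝ) < k.factorial := by positivity
    exact div_le_div_of_nonneg_left (by positivity) hf (fact_le_Gamma_aux hα k)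

/-- The series `Σ C_n(t)x` defining the perturbed fractional cosine family converges
absolutely, and `‖C_α(t;A+B)x‖ ≤ M e^{ωt} E_α(M K_t t^α) ‖x‖`, where
`E_α(z) = Σ_k z^k/Γ(kα+1)` is the Mittag-Leffler function. -/
theorem perturbed_cosine_series_bound {X : Type*} [NormedAddCommGroup X] [NormedSpace ℝ X]
    [CompleteSpace X] (α M ω : ℝ) (hα1 : 1 < α) (hα2 : α ≤ 2) (hM : 1 ≤ M) (hω : 0 ≤ ω)
    (T B : ℝ → X →L[ℝ] X) (C : ℕ → ℝ → X →L[ℝ] X)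
    (hTcont : ∀ x : X, ContinuousOn (fun t => T t x) (Set.Ici 0))
    (hBcont : ∀ x : X, ContinuousOn (fun t => B t x) (Set.Ici 0))
    (hC0cont : ∀ x : X, ContinuousOn (fun t => C 0 t x) (Set.Ici 0))
    (hTbd : ∀ t : ℝ, 0 ≤ t → ‖T t‖ ≤ M * Real.exp (ω * t) * t ^ (α - 1) / Real.Gamma α)
    (hC0bd : ∀ t : ℝ, 0 ≤ t → ‖C 0 t‖ ≤ M * Real.exp (ω * t))
    (hrec : ∀ (n : ℕ) (t : ℝ) (x : X),
      C (n + 1) t x = ∫ s in (0:ℝ)..t, T (t - s) (B s (C n s x)))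
    (t : ℝ) (ht : 0 ≤ t) (x : X) :
    Summable (fun n : ℕ => ‖C n t x‖) ∧
    ‖∑' n : ℕ, C n t x‖ ≤ M * Real.exp (ω * t) *
      (∑' k : ℕ, (M * (sSup ((fun s => ‖B s‖) '' Set.Icc 0 t)) * t ^ α) ^ k /
        Real.Gamma ((k : ℝ) * α + 1)) * ‖x‖ := by
  set K := sSup ((fun s => ‖B s‖) '' Set.Icc 0 t) with hKdef
  obtain ⟨C', hC'⟩ : ∃ C', ∀ i : Set.Icc (0:ℝ) t, ‖B i‖ ≤ C' := by
    apply banach_steinhaus (g := fun i : Set.Icc (0:ℝ) t => B i)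
    intro y
    obtain ⟨Cb, hCb⟩ := (isCompact_Icc (a := (0:ℝ)) (b := t)).exists_bound_of_continuousOn
      ((hBcont y).mono (fun u hu => hu.1))
    exact ⟨Cb, fun i => hCb i i.2⟩
  have hBdd : BddAbove ((fun s => ‖B s‖) '' Set.Icc 0 t) :=
    ⟨C', by rintro _ ⟨u, hu, rfl⟩; exact hC' ⟨u, hu⟩⟩
  have hK : ∀ u ∈ Set.Icc (0:ℝ) t, ‖B u‖ ≤ K := fun u hu => le_csSup hBdd ⟨u, hu, rfl⟩
  have hK0 : (0:ℝ) ≤ K := le_trans (norm_nonneg _) (hK 0 ⟨le_refl 0, ht⟩)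
  have hM0 : (0:ℝ) < M := lt_of_lt_of_le one_pos hM
  have hα0 : (0:ℝ) < α := by linarith
  have hΓα : 0 < Real.Gamma α := Real.Gamma_pos_of_pos hα0
  have key : ∀ n : ℕ, ∀ s ∈ Set.Icc (0:ℝ) t,
      ‖C n s x‖ ≤ M * Real.exp (ω*s) *
        ((M*K*s^α)^n / Real.Gamma ((n:ℝ)*α+1)) * ‖x‖ := by
    intro n
    induction n with
    | zero =>
      intro s hs
      calc ‖C 0 s x‖ ≤ ‖C 0 s‖ * ‖x‖ := (C 0 s).le_opNorm x
        _ ≤ (M * Real.exp (ω*s)) * ‖x‖ :=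
          mul_le_mul_of_nonneg_right (hC0bd s hs.1) (norm_nonneg x)
        _ = _ := by simp [Real.Gamma_one]
    | succ n ih =>
      intro s hs
      obtain ⟨hs0, hst⟩ := hs
      have hΓa : 0 < Real.Gamma ((n:ℝ)*α+1) := Real.Gamma_pos_of_pos (by positivity)
      have hΓb : 0 < Real.Gamma (((n:ℝ)*α+1)+α) := Real.Gamma_pos_of_pos (by positivity)
      rcases eq_or_lt_of_le hs0 with h0 | h0
      · rw [hrec, ← h0, intervalIntegral.integral_same, norm_zero]
        have : (0:ℝ) ≤ (M*K*s^α)^(n+1) / Real.Gamma ((((n+1):ℕ):ℝ)*α+1) := by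
          have : 0 < Real.Gamma ((((n+1):ℕ):ℝ)*α+1) := Real.Gamma_pos_of_pos (by positivity)
          positivity
        positivity
      · set D : ℝ := M^2 * K * (M*K)^n * Real.exp (ω*s) * ‖x‖ /
          (Real.Gamma α * Real.Gamma ((n:ℝ)*α+1)) with hDdef
        have hD0 : 0 ≤ D := by positivity
        have hbd : ∀ u ∈ Set.uIoc (0:ℝ) s,
            ‖T (s-u) (B u (C n u x))‖ ≤ D * (u ^ ((n:ℝ)*α) * (s-u)^(α-1)) := by
          intro u hu
          rw [Set.uIoc_of_le h0.le] at hu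
          obtain ⟨hu0, hus⟩ := hu
          have hu0' : 0 ≤ u := hu0.le
          have hut : u ∈ Set.Icc (0:ℝ) t := ⟨hu0', hus.trans hst⟩
          have h1 : ‖T (s-u) (B u (C n u x))‖ ≤ ‖T (s-u)‖ * (‖B u‖ * ‖C n u x‖) :=
            le_trans ((T (s-u)).le_opNorm _)
              (mul_le_mul_of_nonneg_left ((B u).le_opNorm _) (norm_nonneg _))
          have h2 := hTbd (s-u) (by linarith)
          have h3 := hK u hut
          have h4 := ih u hut
          calc ‖T (s-u) (B u (C n u x))‖
              ≤ (M * Real.exp (ω*(s-u)) * (s-u)^(α-1) / Real.Gamma α) *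
                (K * (M * Real.exp (ω*u) * ((M*K*u^α)^n / Real.Gamma ((n:ℝ)*α+1)) * ‖x‖)) := by
                have hsu : (0:ℝ) ≤ s - u := by linarith
                have hsupow : (0:ℝ) ≤ (s-u)^(α-1) := Real.rpow_nonneg hsu _
                refine h1.trans (mul_le_mul h2 (mul_le_mul h3 h4 (norm_nonneg _) hK0)
                  (by positivity) (by positivity))
            _ = D * (u ^ ((n:ℝ)*α) * (s-u)^(α-1)) := by
                have hE : Real.exp (ω*(s-u)) = Real.exp (ω*s) * (Real.exp (ω*u))⁻¹ := by
                  rw [← Real.exp_neg, ← Real.exp_add]; congr 1; ring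
                have hpow : (M*K*u^α)^n = (M*K)^n * u^((n:ℝ)*α) := by
                  rw [mul_pow, ← Real.rpow_natCast (u^α) n, ← Real.rpow_mul hu0',
                    mul_comm α (n:ℝ)]
                rw [hE, hpow, hDdef]
                field_simp
        have hInt : IntervalIntegrable (fun u => D * (u ^ ((n:ℝ)*α) * (s-u)^(α-1)))
            volume 0 s := by
          apply ContinuousOn.intervalIntegrable
          apply ContinuousOn.mul continuousOn_const
          apply ContinuousOn.mul
          · intro u _
            exact (Real.continuousAt_rpow_const u _ (Or.inr (by positivity))).continuousWithinAt
          · intro u _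
            exact (((Real.continuousAt_rpow_const (s-u) (α-1)
              (Or.inr (by linarith))).comp
              ((continuous_const.sub continuous_id).continuousAt))).continuousWithinAt
        have hval : ∫ u in (0:ℝ)..s, D * (u ^ ((n:ℝ)*α) * (s-u)^(α-1))
            = D * (Real.Gamma ((n:ℝ)*α+1) * Real.Gamma α /
                Real.Gamma (((n:ℝ)*α+1)+α) * s ^ ((n:ℝ)*α + α)) := by
          rw [intervalIntegral.integral_const_mul,
            real_beta_eval' (by positivity) hα0 h0]
        have hnorm := intervalIntegral.norm_integral_le_abs_of_norm_le
          (μ := volume) (f := fun u => T (s-u) (B u (C n u x))) (a := 0) (b := s)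
          (MeasureTheory.ae_restrict_of_forall_mem measurableSet_uIoc hbd) hInt
        rw [hrec]
        refine hnorm.trans ?_
        rw [hval, abs_of_nonneg (by positivity)]
        have hfinal : D * (Real.Gamma ((n:ℝ)*α+1) * Real.Gamma α /
              Real.Gamma (((n:ℝ)*α+1)+α) * s ^ ((n:ℝ)*α + α))
            = M * Real.exp (ω*s) *
              ((M*K*s^α)^(n+1) / Real.Gamma ((((n+1):ℕ):ℝ)*α+1)) * ‖x‖ := by
          have hG : Real.Gamma ((((n+1):ℕ):ℝ)*α+1) = Real.Gamma (((n:ℝ)*α+1)+α) := by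
            congr 1; push_cast; ring
          have hpow : (M*K*s^α)^(n+1) = (M*K)^(n+1) * s^(((n:ℝ)+1)*α) := by
            rw [mul_pow, ← Real.rpow_natCast (s^α) (n+1), ← Real.rpow_mul hs0]
            push_cast; ring_nf
          rw [hG, hpow, hDdef, show ((n:ℝ)+1)*α = (n:ℝ)*α + α from by ring, pow_succ]
          field_simp
          ring
        rw [hfinal]
  have hz : (0:ℝ) ≤ M * K * t ^ α := by positivity
  have hSa : Summable (fun k : ℕ => (M*K*t^α) ^ k / Real.Gamma ((k:ℝ)*α+1)) :=
    ML_summable hα1 hz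
  have hbound : ∀ n : ℕ, ‖C n t x‖ ≤ (M * Real.exp (ω*t) * ‖x‖) *
      ((M*K*t^α) ^ n / Real.Gamma ((n:ℝ)*α+1)) := fun n =>
    (key n t ⟨ht, le_refl t⟩).trans (le_of_eq (by ring))
  have hsum : Summable (fun n : ℕ => ‖C n t x‖) :=
    Summable.of_nonneg_of_le (fun n => norm_nonneg _) hbound
      (hSa.mul_left _)
  refine ⟨hsum, ?_⟩
  calc ‖∑' n : ℕ, C n t x‖ ≤ ∑' n : ℕ, ‖C n t x‖ := norm_tsum_le_tsum_norm hsum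
    _ ≤ ∑' n : ℕ, (M * Real.exp (ω*t) * ‖x‖) *
        ((M*K*t^α) ^ n / Real.Gamma ((n:ℝ)*α+1)) :=
      Summable.tsum_le_tsum hbound hsum (hSa.mul_left _)
    _ = (M * Real.exp (ω*t) * ‖x‖) *
        ∑' n : ℕ, (M*K*t^α) ^ n / Real.Gamma ((n:ℝ)*α+1) := tsum_mul_left
    _ = _ := by ring
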